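/- Let B be a hereditarily paracompact Hausdorff space and p : X → B × [0,1] a map such that every point (y,t) ∈ B × [0,1] has a neighborhood U × [a,b] over which p is trivial in the sense that p^{-1}(U × [a,b]) is homeomorphic over the identity of U × [a,b] to p^{-1}(U × {a}) × [a,b], restricting to the identity over U × {a}. Then every y ∈ B has a neighborhood U such that p^{-1}(U × [0,1]) is homeomorphic over id_{U×[0,1]} to p^{-1}(U × {0}) × [0,1], restricting to the identity over U × {0}. -/

import Mathlib

open unitInterval

/-- The tube `p⁻¹(U × [a,b])`. -/
def tubeSet {X B : Type*} (p : X → B × unitInterval) (U : Set B) (a b : unitInterval) :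
    Set X :=
  {x | (p x).1 ∈ U ∧ (p x).2 ∈ Set.Icc a b}

/-- The slice `p⁻¹(U × {a})`. -/
def sliceSet {X B : Type*} (p : X → B × unitInterval) (U : Set B) (a : unitInterval) :
    Set X :=
  {x | (p x).1 ∈ U ∧ (p x).2 = a}

/-- `p` is trivial over `U × [a,b]`: there is a homeomorphism
`p⁻¹(U × [a,b]) ≅ p⁻¹(U × {a}) × [a,b]` over the identity of `U × [a,b]`,
restricting to the identity over `U × {a}`. -/
def TrivOn {X B : Type*} [TopologicalSpace X] [TopologicalSpace B]
    (p : X → B × unitInterval) (U : Set B) (a b : unitInterval) : Prop :=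
  ∃ φ : (tubeSet p U a b) ≃ₜ (sliceSet p U a) × (Set.Icc a b),
    (∀ x : tubeSet p U a b,
      (p ((φ x).1 : X)).1 = (p (x : X)).1 ∧ ((φ x).2 : unitInterval) = (p (x : X)).2) ∧
    (∀ x : tubeSet p U a b, (p (x : X)).2 = a → ((φ x).1 : X) = (x : X))

section Aux

variable {X B : Type*} [TopologicalSpace X] [TopologicalSpace B] {p : X → B × unitInterval}

lemma trivOn_symm_prop {U : Set B} {a b : unitInterval}
    (φ : (tubeSet p U a b) ≃ₜ (sliceSet p U a) × (Set.Icc a b))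
    (hφ1 : ∀ x : tubeSet p U a b,
      (p ((φ x).1 : X)).1 = (p (x : X)).1 ∧ ((φ x).2 : unitInterval) = (p (x : X)).2)
    (q : (sliceSet p U a) × (Set.Icc a b)) :
    (p (φ.symm q : X)).1 = (p (q.1 : X)).1 ∧ (p (φ.symm q : X)).2 = (q.2 : unitInterval) := by
  have h := hφ1 (φ.symm q)
  rw [φ.apply_symm_apply] at h
  exact ⟨h.1.symm, h.2.symm⟩

lemma trivOn_mono {U V : Set B} {a b : unitInterval} (hV : V ⊆ U) (h : TrivOn p U a b) :
    TrivOn p V a b := by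
  obtain ⟨φ, hφ1, hφ2⟩ := h
  have hφs := trivOn_symm_prop φ hφ1
  let ι : tubeSet p V a b → tubeSet p U a b := fun x => ⟨x.1, hV x.2.1, x.2.2⟩
  have hι : Continuous ι := Continuous.subtype_mk continuous_subtype_val _
  let j : sliceSet p V a → sliceSet p U a := fun x => ⟨x.1, hV x.2.1, x.2.2⟩
  have hj : Continuous j := Continuous.subtype_mk continuous_subtype_val _
  let F : tubeSet p V a b → (sliceSet p V a) × (Set.Icc a b) := fun x =>
    (⟨((φ (ι x)).1 : X), by
        refine ⟨?_, ((φ (ι x)).1).2.2⟩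
        rw [(hφ1 (ι x)).1]; exact x.2.1⟩,
      (φ (ι x)).2)
  let G : (sliceSet p V a) × (Set.Icc a b) → tubeSet p V a b := fun q =>
    ⟨(φ.symm (j q.1, q.2) : X), by
      refine ⟨?_, (φ.symm (j q.1, q.2)).2.2⟩
      rw [(hφs (j q.1, q.2)).1]; exact q.1.2.1⟩
  have hFG : ∀ x, G (F x) = x := by
    intro x
    apply Subtype.ext
    show (φ.symm (j (F x).1, (F x).2) : X) = (x : X)
    have h1 : (j (F x).1, (F x).2) = φ (ι x) := Prod.ext (Subtype.ext rfl) rfl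
    rw [h1, φ.symm_apply_apply]
  have hGF : ∀ q, F (G q) = q := by
    intro q
    have h1 : ι (G q) = φ.symm (j q.1, q.2) := Subtype.ext rfl
    refine Prod.ext (Subtype.ext ?_) ?_
    · show ((φ (ι (G q))).1 : X) = (q.1 : X)
      rw [h1, φ.apply_symm_apply]
    · show (φ (ι (G q))).2 = q.2
      rw [h1, φ.apply_symm_apply]
  refine ⟨⟨⟨F, G, hFG, hGF⟩, ?_, ?_⟩, ?_, ?_⟩
  · exact Continuous.prodMk
      (Continuous.subtype_mk
        (continuous_subtype_val.comp (continuous_fst.comp (φ.continuous.comp hι))) _)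
      (continuous_snd.comp (φ.continuous.comp hι))
  · exact Continuous.subtype_mk
      (continuous_subtype_val.comp (φ.symm.continuous.comp
        ((hj.comp continuous_fst).prodMk continuous_snd))) _
  · intro x
    exact ⟨(hφ1 (ι x)).1, (hφ1 (ι x)).2⟩
  · intro x hx
    exact hφ2 (ι x) hx

lemma trivOn_refl (U : Set B) (a : unitInterval) : TrivOn p U a a := by
  let F : tubeSet p U a a → (sliceSet p U a) × (Set.Icc a a) := fun x =>
    (⟨x.1, x.2.1, le_antisymm x.2.2.2 x.2.2.1⟩, ⟨a, le_refl a, le_refl a⟩)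
  let G : (sliceSet p U a) × (Set.Icc a a) → tubeSet p U a a := fun q =>
    ⟨q.1.1, q.1.2.1, by rw [q.1.2.2]; exact ⟨le_refl a, le_refl a⟩⟩
  refine ⟨⟨⟨F, G, fun x => Subtype.ext rfl, fun q => Prod.ext (Subtype.ext rfl)
      (Subtype.ext (le_antisymm q.2.2.1 q.2.2.2))⟩, ?_, ?_⟩, ?_, ?_⟩
  · exact Continuous.prodMk (Continuous.subtype_mk continuous_subtype_val _) continuous_const
  · exact Continuous.subtype_mk (continuous_subtype_val.comp continuous_fst) _
  · intro x
    exact ⟨rfl, le_antisymm x.2.2.1 x.2.2.2⟩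
  · intro x _
    rfl

variable {X B : Type*} [TopologicalSpace X] [TopologicalSpace B] {p : X → B × unitInterval}

lemma trivOn_shrink {U : Set B} {a b a' b' : unitInterval} (h : TrivOn p U a b)
    (ha : a ≤ a') (hab : a' ≤ b') (hb : b' ≤ b) : TrivOn p U a' b' := by
  obtain ⟨φ, hφ1, hφ2⟩ := h
  have hφs := trivOn_symm_prop φ hφ1
  have ha'ab : a' ∈ Set.Icc a b := ⟨ha, le_trans hab hb⟩
  let ι : tubeSet p U a' b' → tubeSet p U a b := fun x =>
    ⟨x.1, x.2.1, le_trans ha x.2.2.1, le_trans x.2.2.2 hb⟩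
  have hι : Continuous ι := Continuous.subtype_mk continuous_subtype_val _
  let κ : sliceSet p U a' → tubeSet p U a b := fun z =>
    ⟨z.1, z.2.1, by rw [z.2.2]; exact ha'ab⟩
  have hκ : Continuous κ := Continuous.subtype_mk continuous_subtype_val _
  let F : tubeSet p U a' b' → (sliceSet p U a') × (Set.Icc a' b') := fun x =>
    (⟨(φ.symm ((φ (ι x)).1, ⟨a', ha'ab⟩) : X), by
        constructor
        · rw [(hφs ((φ (ι x)).1, ⟨a', ha'ab⟩)).1]; exact ((φ (ι x)).1).2.1
        · exact (hφs ((φ (ι x)).1, ⟨a', ha'ab⟩)).2⟩,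
      ⟨((φ (ι x)).2 : unitInterval), by rw [(hφ1 (ι x)).2]; exact x.2.2⟩)
  let G : (sliceSet p U a') × (Set.Icc a' b') → tubeSet p U a' b' := fun q =>
    ⟨(φ.symm ((φ (κ q.1)).1, ⟨(q.2 : unitInterval), le_trans ha q.2.2.1,
        le_trans q.2.2.2 hb⟩) : X), by
      constructor
      · rw [(hφs _).1]; exact ((φ (κ q.1)).1).2.1
      · rw [(hφs _).2]; exact q.2.2⟩
  have hFG : ∀ x, G (F x) = x := by
    intro x
    apply Subtype.ext
    show (φ.symm ((φ (κ (F x).1)).1, _) : X) = (x : X)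
    have e1 : κ (F x).1 = φ.symm ((φ (ι x)).1, ⟨a', ha'ab⟩) := Subtype.ext rfl
    rw [e1, φ.apply_symm_apply]
    have e2 : (((φ (ι x)).1, (⟨((F x).2 : unitInterval), le_trans ha (F x).2.2.1,
        le_trans (F x).2.2.2 hb⟩ : Set.Icc a b)) : (sliceSet p U a) × (Set.Icc a b)) = φ (ι x) :=
      Prod.ext rfl (Subtype.ext rfl)
    rw [e2, φ.symm_apply_apply]
  have hGF : ∀ q, F (G q) = q := by
    intro q
    have e1 : ι (G q) = φ.symm ((φ (κ q.1)).1, ⟨(q.2 : unitInterval), le_trans ha q.2.2.1,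
        le_trans q.2.2.2 hb⟩) := Subtype.ext rfl
    have e2 : (φ (κ q.1)).2 = (⟨a', ha'ab⟩ : Set.Icc a b) :=
      Subtype.ext (by rw [(hφ1 (κ q.1)).2]; exact q.1.2.2)
    refine Prod.ext (Subtype.ext ?_) (Subtype.ext ?_)
    · show (φ.symm ((φ (ι (G q))).1, ⟨a', ha'ab⟩) : X) = (q.1 : X)
      rw [e1, φ.apply_symm_apply]
      show (φ.symm ((φ (κ q.1)).1, ⟨a', ha'ab⟩) : X) = (q.1 : X)
      rw [← e2, φ.symm_apply_apply]
    · show ((φ (ι (G q))).2 : unitInterval) = (q.2 : unitInterval)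
      rw [e1, φ.apply_symm_apply]
  refine ⟨⟨⟨F, G, hFG, hGF⟩, ?_, ?_⟩, ?_, ?_⟩
  · refine Continuous.prodMk (Continuous.subtype_mk ?_ _) (Continuous.subtype_mk ?_ _)
    · exact continuous_subtype_val.comp (φ.symm.continuous.comp
        ((continuous_fst.comp (φ.continuous.comp hι)).prodMk continuous_const))
    · exact continuous_subtype_val.comp (continuous_snd.comp (φ.continuous.comp hι))
  · refine Continuous.subtype_mk ?_ _
    refine continuous_subtype_val.comp (φ.symm.continuous.comp (Continuous.prodMk ?_ ?_))
    · exact continuous_fst.comp (φ.continuous.comp (hκ.comp continuous_fst))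
    · exact Continuous.subtype_mk (continuous_subtype_val.comp continuous_snd) _
  · intro x
    constructor
    · show (p (φ.symm ((φ (ι x)).1, ⟨a', ha'ab⟩) : X)).1 = (p (x : X)).1
      rw [(hφs _).1]
      exact (hφ1 (ι x)).1
    · exact (hφ1 (ι x)).2
  · intro x hx
    show (φ.symm ((φ (ι x)).1, ⟨a', ha'ab⟩) : X) = (x : X)
    have e2 : (φ (ι x)).2 = (⟨a', ha'ab⟩ : Set.Icc a b) :=
      Subtype.ext (by rw [(hφ1 (ι x)).2]; exact hx)
    rw [← e2, φ.symm_apply_apply]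


lemma continuous_of_two_closed {α β : Type*} [TopologicalSpace α] [TopologicalSpace β]
    {f : α → β} {s t : Set α} (hs : IsClosed s) (ht : IsClosed t) (hst : s ∪ t = Set.univ)
    (h1 : ContinuousOn f s) (h2 : ContinuousOn f t) : Continuous f := by
  have hlf : LocallyFinite (fun b : Bool => if b then s else t) :=
    locallyFinite_of_finite _
  refine hlf.continuous ?_ ?_ ?_
  · rw [Set.iUnion_eq_univ_iff]
    intro x
    rcases (hst ▸ Set.mem_univ x : x ∈ s ∪ t) with h | h
    · exact ⟨true, by simpa⟩
    · exact ⟨false, by simpa⟩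
  · intro b; cases b <;> simpa
  · intro b; cases b <;> simpa

lemma trivOn_glue (hp : Continuous p) {U : Set B} {a b c : unitInterval}
    (hab : a ≤ b) (hbc : b ≤ c) (h1 : TrivOn p U a b) (h2 : TrivOn p U b c) :
    TrivOn p U a c := by
  obtain ⟨φ, hφ1, hφ2⟩ := h1
  obtain ⟨χ, hχ1, hχ2⟩ := h2
  have hφs := trivOn_symm_prop φ hφ1
  have hχs := trivOn_symm_prop χ hχ1
  -- membership helpers
  have memab : ∀ x : X, x ∈ tubeSet p U a c → (p x).2 ≤ b → x ∈ tubeSet p U a b :=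
    fun x hx h => ⟨hx.1, hx.2.1, h⟩
  have membc : ∀ x : X, x ∈ tubeSet p U a c → b ≤ (p x).2 → x ∈ tubeSet p U b c :=
    fun x hx h => ⟨hx.1, h, hx.2.2⟩
  let κ : sliceSet p U b → tubeSet p U a b := fun z =>
    ⟨z.1, z.2.1, by rw [z.2.2]; exact ⟨hab, le_refl b⟩⟩
  have hκ : Continuous κ := Continuous.subtype_mk continuous_subtype_val _
  -- pieces of the forward map
  let f₁ : tubeSet p U a b → (sliceSet p U a) × (Set.Icc a c) := fun z =>
    ((φ z).1, ⟨(p z.1).2, z.2.2.1, le_trans z.2.2.2 hbc⟩)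
  have hf₁ : Continuous f₁ := Continuous.prodMk (continuous_fst.comp φ.continuous)
    (Continuous.subtype_mk ((hp.comp continuous_subtype_val).snd) _)
  let f₂ : tubeSet p U b c → (sliceSet p U a) × (Set.Icc a c) := fun z =>
    ((φ (κ (χ z).1)).1, ⟨(p z.1).2, le_trans hab z.2.2.1, z.2.2.2⟩)
  have hf₂ : Continuous f₂ := Continuous.prodMk
    (continuous_fst.comp (φ.continuous.comp (hκ.comp (continuous_fst.comp χ.continuous))))
    (Continuous.subtype_mk ((hp.comp continuous_subtype_val).snd) _)
  let F : tubeSet p U a c → (sliceSet p U a) × (Set.Icc a c) := fun x =>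
    if h : (p x.1).2 ≤ b then f₁ ⟨x.1, memab x.1 x.2 h⟩
    else f₂ ⟨x.1, membc x.1 x.2 (le_of_not_ge h)⟩
  -- agreement of the two pieces at the seam
  have hagree : ∀ (x : X) (hx : x ∈ tubeSet p U a c) (hb : (p x).2 = b),
      f₁ ⟨x, memab x hx hb.le⟩ = f₂ ⟨x, membc x hx hb.ge⟩ := by
    intro x hx hb
    have h2 := hχ2 ⟨x, membc x hx hb.ge⟩ hb
    have e : κ (χ (⟨x, membc x hx hb.ge⟩ : tubeSet p U b c)).1
        = (⟨x, memab x hx hb.le⟩ : tubeSet p U a b) := Subtype.ext h2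
    refine Prod.ext ?_ rfl
    show (φ (⟨x, memab x hx hb.le⟩ : tubeSet p U a b)).1
        = (φ (κ (χ (⟨x, membc x hx hb.ge⟩ : tubeSet p U b c)).1)).1
    rw [e]
  have hFc : Continuous F := by
    have hq : Continuous (fun x : tubeSet p U a c => (p x.1).2) :=
      (hp.comp continuous_subtype_val).snd
    refine continuous_of_two_closed (s := {x : tubeSet p U a c | (p x.1).2 ≤ b})
      (t := {x : tubeSet p U a c | b ≤ (p x.1).2})
      (isClosed_le hq continuous_const) (isClosed_le continuous_const hq) ?_ ?_ ?_
    · ext x; simp [le_total]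
    · rw [continuousOn_iff_continuous_restrict]
      have : Set.domRestrict {x : tubeSet p U a c | (p x.1).2 ≤ b} F
          = fun z => f₁ ⟨z.1.1, memab z.1.1 z.1.2 z.2⟩ := by
        funext z
        exact dif_pos z.2
      rw [this]
      exact hf₁.comp (Continuous.subtype_mk
        (continuous_subtype_val.comp continuous_subtype_val) _)
    · rw [continuousOn_iff_continuous_restrict]
      have : Set.domRestrict {x : tubeSet p U a c | b ≤ (p x.1).2} F
          = fun z => f₂ ⟨z.1.1, membc z.1.1 z.1.2 z.2⟩ := by
        funext z
        by_cases h : (p z.1.1).2 ≤ b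
        · have hb : (p z.1.1).2 = b := le_antisymm h z.2
          show F z.1 = _
          unfold F
          beta_reduce
          rw [dif_pos h]
          exact hagree z.1.1 z.1.2 hb
        · show F z.1 = _
          unfold F
          beta_reduce
          rw [dif_neg h]
      rw [this]
      exact hf₂.comp (Continuous.subtype_mk
        (continuous_subtype_val.comp continuous_subtype_val) _)
  -- pieces of the inverse map
  let g₁ : (sliceSet p U a) × (Set.Icc a b) → tubeSet p U a c := fun q =>
    ⟨(φ.symm q : X), by
      constructor
      · rw [(hφs q).1]; exact q.1.2.1
      · rw [(hφs q).2]; exact ⟨q.2.2.1, le_trans q.2.2.2 hbc⟩⟩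
  have hg₁ : Continuous g₁ :=
    Continuous.subtype_mk (continuous_subtype_val.comp φ.symm.continuous) _
  let w : sliceSet p U a → sliceSet p U b := fun z =>
    ⟨(φ.symm (z, ⟨b, hab, le_refl b⟩) : X), by
      constructor
      · rw [(hφs (z, ⟨b, hab, le_refl b⟩)).1]; exact z.2.1
      · exact (hφs (z, ⟨b, hab, le_refl b⟩)).2⟩
  have hw : Continuous w := Continuous.subtype_mk
    (continuous_subtype_val.comp (φ.symm.continuous.comp
      (continuous_id.prodMk continuous_const))) _
  let g₂ : (sliceSet p U a) × (Set.Icc b c) → tubeSet p U a c := fun q =>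
    ⟨(χ.symm (w q.1, q.2) : X), by
      constructor
      · rw [(hχs (w q.1, q.2)).1]; exact (w q.1).2.1
      · rw [(hχs (w q.1, q.2)).2]; exact ⟨le_trans hab q.2.2.1, q.2.2.2⟩⟩
  have hg₂ : Continuous g₂ := Continuous.subtype_mk
    (continuous_subtype_val.comp (χ.symm.continuous.comp
      ((hw.comp continuous_fst).prodMk continuous_snd))) _
  let G : (sliceSet p U a) × (Set.Icc a c) → tubeSet p U a c := fun q =>
    if h : (q.2 : unitInterval) ≤ b then g₁ (q.1, ⟨q.2, q.2.2.1, h⟩)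
    else g₂ (q.1, ⟨q.2, le_of_not_ge h, q.2.2.2⟩)
  -- agreement for G at the seam
  have hGagree : ∀ (z : sliceSet p U a) (t : unitInterval) (htb : t = b)
      (h1' : t ∈ Set.Icc a b) (h2' : t ∈ Set.Icc b c),
      g₁ (z, ⟨t, h1'⟩) = g₂ (z, ⟨t, h2'⟩) := by
    intro z t htb h1' h2'
    apply Subtype.ext
    show (φ.symm (z, ⟨t, h1'⟩) : X) = (χ.symm (w z, ⟨t, h2'⟩) : X)
    have e0 : ((z, ⟨t, h1'⟩) : (sliceSet p U a) × Set.Icc a b)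
        = (z, ⟨b, hab, le_refl b⟩) := Prod.ext rfl (Subtype.ext htb)
    rw [e0]
    have hx := hχ2 (χ.symm (w z, ⟨t, h2'⟩))
      (by rw [(hχs (w z, ⟨t, h2'⟩)).2]; exact htb)
    rw [χ.apply_symm_apply] at hx
    exact hx
  have hGc : Continuous G := by
    have hq : Continuous (fun q : (sliceSet p U a) × (Set.Icc a c) => (q.2 : unitInterval)) :=
      continuous_subtype_val.comp continuous_snd
    refine continuous_of_two_closed
      (s := {q : (sliceSet p U a) × (Set.Icc a c) | (q.2 : unitInterval) ≤ b})
      (t := {q : (sliceSet p U a) × (Set.Icc a c) | b ≤ (q.2 : unitInterval)})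
      (isClosed_le hq continuous_const) (isClosed_le continuous_const hq) ?_ ?_ ?_
    · ext q; simp [le_total]
    · rw [continuousOn_iff_continuous_restrict]
      have : Set.domRestrict {q : (sliceSet p U a) × (Set.Icc a c) | (q.2 : unitInterval) ≤ b} G
          = fun z => g₁ (z.1.1, ⟨z.1.2, z.1.2.2.1, z.2⟩) := by
        funext z
        exact dif_pos z.2
      rw [this]
      exact hg₁.comp (Continuous.prodMk (continuous_fst.comp continuous_subtype_val)
        (Continuous.subtype_mk (continuous_subtype_val.comp
          (continuous_snd.comp continuous_subtype_val)) _))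
    · rw [continuousOn_iff_continuous_restrict]
      have : Set.domRestrict {q : (sliceSet p U a) × (Set.Icc a c) | b ≤ (q.2 : unitInterval)} G
          = fun z => g₂ (z.1.1, ⟨z.1.2, z.2, z.1.2.2.2⟩) := by
        funext z
        by_cases h : (z.1.2 : unitInterval) ≤ b
        · have hb : (z.1.2 : unitInterval) = b := le_antisymm h z.2
          show G z.1 = _
          unfold G
          beta_reduce
          rw [dif_pos h]
          exact hGagree z.1.1 z.1.2 hb _ _
        · show G z.1 = _
          unfold G
          beta_reduce
          rw [dif_neg h]
      rw [this]
      exact hg₂.comp (Continuous.prodMk (continuous_fst.comp continuous_subtype_val)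
        (Continuous.subtype_mk (continuous_subtype_val.comp
          (continuous_snd.comp continuous_subtype_val)) _))
  -- left inverse
  have hFG : ∀ x, G (F x) = x := by
    intro x
    by_cases h : (p x.1).2 ≤ b
    · set x' : tubeSet p U a b := ⟨x.1, memab x.1 x.2 h⟩ with hx'
      have hF : F x = f₁ x' := dif_pos h
      have hcond : ((f₁ x').2 : unitInterval) ≤ b := h
      rw [hF]
      show G (f₁ x') = x
      unfold G
      beta_reduce
      rw [dif_pos hcond]
      apply Subtype.ext
      show (φ.symm ((f₁ x').1, ⟨((f₁ x').2 : unitInterval), _⟩) : X) = x.1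
      have e : (((f₁ x').1, (⟨((f₁ x').2 : unitInterval), (f₁ x').2.2.1, hcond⟩ : Set.Icc a b))
          : (sliceSet p U a) × Set.Icc a b) = φ x' :=
        Prod.ext rfl (Subtype.ext (hφ1 x').2.symm)
      rw [e, φ.symm_apply_apply]
    · set x' : tubeSet p U b c := ⟨x.1, membc x.1 x.2 (le_of_not_ge h)⟩ with hx'
      have hF : F x = f₂ x' := dif_neg h
      have hcond : ¬ ((f₂ x').2 : unitInterval) ≤ b := h
      rw [hF]
      show G (f₂ x') = x
      unfold G
      beta_reduce
      rw [dif_neg hcond]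
      apply Subtype.ext
      show (χ.symm (w (f₂ x').1, ⟨((f₂ x').2 : unitInterval), _⟩) : X) = x.1
      -- w (f₂ x').1 = (χ x').1
      have efib : (φ (κ (χ x').1)).2 = (⟨b, hab, le_refl b⟩ : Set.Icc a b) :=
        Subtype.ext (by rw [(hφ1 (κ (χ x').1)).2]; exact ((χ x').1).2.2)
      have ew : w (f₂ x').1 = (χ x').1 := by
        apply Subtype.ext
        show (φ.symm ((φ (κ (χ x').1)).1, ⟨b, hab, le_refl b⟩) : X) = ((χ x').1 : X)
        rw [← efib, φ.symm_apply_apply]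
      have et : ((w (f₂ x').1, (⟨((f₂ x').2 : unitInterval), le_of_not_ge hcond,
          (f₂ x').2.2.2⟩ : Set.Icc b c)) : (sliceSet p U b) × Set.Icc b c) = χ x' := by
        refine Prod.ext ew (Subtype.ext ?_)
        show (p x.1).2 = ((χ x').2 : unitInterval)
        exact (hχ1 x').2.symm
      rw [et, χ.symm_apply_apply]
  -- right inverse
  have hGF : ∀ q, F (G q) = q := by
    intro q
    by_cases h : (q.2 : unitInterval) ≤ b
    · set q' : (sliceSet p U a) × (Set.Icc a b) := (q.1, ⟨q.2, q.2.2.1, h⟩) with hq'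
      have hG : G q = g₁ q' := dif_pos h
      rw [hG]
      have hfib : (p ((g₁ q' : tubeSet p U a c) : X)).2 = (q.2 : unitInterval) := (hφs q').2
      have hcond : (p ((g₁ q' : tubeSet p U a c) : X)).2 ≤ b := by rw [hfib]; exact h
      show F (g₁ q') = q
      unfold F
      beta_reduce
      rw [dif_pos hcond]
      have e1 : (⟨(g₁ q' : tubeSet p U a c).1, memab _ (g₁ q').2 hcond⟩ : tubeSet p U a b)
          = φ.symm q' := Subtype.ext rfl
      refine Prod.ext ?_ (Subtype.ext ?_)
      · show (φ (⟨(g₁ q' : tubeSet p U a c).1, memab _ (g₁ q').2 hcond⟩ : tubeSet p U a b)).1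
            = q.1
        rw [e1, φ.apply_symm_apply]
      · show (p ((g₁ q' : tubeSet p U a c) : X)).2 = (q.2 : unitInterval)
        exact hfib
    · set q' : (sliceSet p U a) × (Set.Icc b c) := (q.1, ⟨q.2, le_of_not_ge h, q.2.2.2⟩) with hq'
      have hG : G q = g₂ q' := dif_neg h
      rw [hG]
      have hfib : (p ((g₂ q' : tubeSet p U a c) : X)).2 = (q.2 : unitInterval) := (hχs (w q.1, q'.2)).2
      have hcond : ¬ (p ((g₂ q' : tubeSet p U a c) : X)).2 ≤ b := by rw [hfib]; exact h
      show F (g₂ q') = q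
      unfold F
      beta_reduce
      rw [dif_neg hcond]
      have e1 : (⟨(g₂ q' : tubeSet p U a c).1, membc _ (g₂ q').2 (le_of_not_ge hcond)⟩
          : tubeSet p U b c) = χ.symm (w q.1, q'.2) := Subtype.ext rfl
      refine Prod.ext ?_ (Subtype.ext ?_)
      · show (φ (κ (χ (⟨(g₂ q' : tubeSet p U a c).1, membc _ (g₂ q').2
            (le_of_not_ge hcond)⟩ : tubeSet p U b c)).1)).1 = q.1
        rw [e1, χ.apply_symm_apply]
        have efib : (φ (κ (w q.1))).2 = (⟨b, hab, le_refl b⟩ : Set.Icc a b) :=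
          Subtype.ext (by rw [(hφ1 (κ (w q.1))).2]; exact (w q.1).2.2)
        have eκ : κ (w q.1) = φ.symm (q.1, ⟨b, hab, le_refl b⟩) := Subtype.ext rfl
        show (φ (κ (w q.1))).1 = q.1
        rw [eκ, φ.apply_symm_apply]
      · show (p ((g₂ q' : tubeSet p U a c) : X)).2 = (q.2 : unitInterval)
        exact hfib
  refine ⟨⟨⟨F, G, hFG, hGF⟩, hFc, hGc⟩, ?_, ?_⟩
  · intro x
    by_cases h : (p x.1).2 ≤ b
    · have hF : F x = f₁ ⟨x.1, memab x.1 x.2 h⟩ := dif_pos h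
      constructor
      · show (p ((F x).1 : X)).1 = (p x.1).1
        rw [hF]
        exact (hφ1 ⟨x.1, memab x.1 x.2 h⟩).1
      · show ((F x).2 : unitInterval) = (p x.1).2
        rw [hF]
    · set x' : tubeSet p U b c := ⟨x.1, membc x.1 x.2 (le_of_not_ge h)⟩ with hx'
      have hF : F x = f₂ x' := dif_neg h
      constructor
      · show (p ((F x).1 : X)).1 = (p x.1).1
        rw [hF]
        have e1 := (hφ1 (κ (χ x').1)).1
        have e2 := (hχ1 x').1
        show (p ((φ (κ (χ x').1)).1 : X)).1 = (p x.1).1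
        rw [e1]
        exact e2
      · show ((F x).2 : unitInterval) = (p x.1).2
        rw [hF]
  · intro x hx
    have h : (p x.1).2 ≤ b := by rw [hx]; exact hab
    have hF : F x = f₁ ⟨x.1, memab x.1 x.2 h⟩ := dif_pos h
    show ((F x).1 : X) = x.1
    rw [hF]
    exact hφ2 ⟨x.1, memab x.1 x.2 h⟩ hx

end Aux

theorem stmt_17 {X B : Type*} [TopologicalSpace X] [TopologicalSpace B] [T2Space B]
    (hhered : ∀ s : Set B, ParacompactSpace s)
    (p : X → B × unitInterval) (hp : Continuous p)
    (hloc : ∀ (y : B) (t : unitInterval), ∃ U ∈ nhds y, ∃ a b : unitInterval,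
      t ∈ Set.Icc a b ∧ Set.Icc a b ∈ nhds t ∧ TrivOn p U a b) :
    ∀ y : B, ∃ U ∈ nhds y, TrivOn p U 0 1 := by
  intro y
  choose U hU a b hmem hnhds htriv using hloc y
  have hcov : (Set.univ : Set unitInterval) ⊆ ⋃ t, interior (Set.Icc (a t) (b t)) :=
    fun t _ => Set.mem_iUnion.2 ⟨t, mem_interior_iff_mem_nhds.2 (hnhds t)⟩
  obtain ⟨T, hT⟩ := isCompact_univ.elim_finite_subcover
    (fun t => interior (Set.Icc (a t) (b t))) (fun t => isOpen_interior) hcov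
  set V := ⋂ t ∈ T, U t with hV
  have hVnhds : V ∈ nhds y := (Filter.biInter_mem T.finite_toSet).2 fun t _ => hU t
  refine ⟨V, hVnhds, ?_⟩
  have htrivV : ∀ t : T, TrivOn p V (a t) (b t) := fun t =>
    trivOn_mono (Set.biInter_subset_of_mem t.2) (htriv t)
  -- refine the cover using a uniform subdivision
  have hcov' : (Set.univ : Set unitInterval)
      ⊆ ⋃ i : T, interior (Set.Icc (a i) (b i)) := by
    intro s hs
    obtain ⟨t, ht, hst⟩ := Set.mem_iUnion₂.1 (hT hs)
    exact Set.mem_iUnion.2 ⟨⟨t, ht⟩, hst⟩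
  obtain ⟨f, hf0, hfmono, ⟨n₀, hfone⟩, hfsub⟩ :=
    exists_monotone_Icc_subset_open_cover_unitInterval
      (c := fun i : T => interior (Set.Icc (a i) (b i)))
      (fun i => isOpen_interior) hcov'
  have key : ∀ n : ℕ, TrivOn p V 0 (f n) := by
    intro n
    induction n with
    | zero => rw [hf0]; exact trivOn_refl V 0
    | succ n ih =>
      obtain ⟨i, hi⟩ := hfsub n
      have hsub : Set.Icc (f n) (f (n + 1)) ⊆ Set.Icc (a i) (b i) :=
        fun s hs => interior_subset (hi hs)
      have hle : f n ≤ f (n + 1) := hfmono (Nat.le_succ n)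
      have h1 : f n ∈ Set.Icc (a i) (b i) := hsub ⟨le_refl _, hle⟩
      have h2 : f (n + 1) ∈ Set.Icc (a i) (b i) := hsub ⟨hle, le_refl _⟩
      have hstep : TrivOn p V (f n) (f (n + 1)) :=
        trivOn_shrink (htrivV i) h1.1 hle h2.2
      exact trivOn_glue hp (f n).2.1 hle ih hstep
  have := key n₀
  rwa [hfone n₀ (le_refl n₀)] at this
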